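/- (Probabilistic Lemma, Ornstein) Let H be a positive integer and X = {i ∈ ℤ : |i| ≤ H/2}. For a positive integer m, let Ω_m = X^m with the uniform probability measure P_m, let x_1,…,x_m denote the coordinates, and for 1 ≤ k < m and ℓ ∈ ℤ set C_{k,ℓ}(ω) = #{i : 1 ≤ i ≤ m − k, x_{i+k}(ω) − x_i(ω) = ℓ}. Then for every α > 1, ε > 0 and positive integer N, there exists m ≥ N such that P_m( for all 1 ≤ k ≤ (1−ε)m and all ℓ ∈ ℤ, C_{k,ℓ} ≤ (α/H)(m − k) ) > 1 − ε. -/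

import Mathlib

open Finset
open scoped Classical

/-- The set `X = {i ∈ ℤ : |i| ≤ H/2}` as a finset. -/
noncomputable def spacerSet (H : ℕ) : Finset ℤ :=
  (Finset.Icc (-(H : ℤ)) (H : ℤ)).filter (fun i => 2 * |i| ≤ (H : ℤ))

/-- `Ω_m = X^m`, the finset of all `m`-tuples from `spacerSet H`. -/
noncomputable def omegaSet (H m : ℕ) : Finset (Fin m → ℤ) :=
  Fintype.piFinset (fun _ : Fin m => spacerSet H)

/-- `C_{k,ℓ}(ω) = #{1 ≤ i ≤ m − k : x_{i+k}(ω) − x_i(ω) = ℓ}`. -/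
noncomputable def diffCount (m k : ℕ) (ℓ : ℤ) (ω : Fin m → ℤ) : ℕ :=
  ((Finset.range (m - k)).filter (fun i =>
    if hp : i + k < m ∧ i < m then ω ⟨i + k, hp.1⟩ - ω ⟨i, hp.2⟩ = ℓ else False)).card

lemma spacer_eq (H : ℕ) : spacerSet H = Finset.Icc (-((H/2 : ℕ) : ℤ)) ((H/2 : ℕ) : ℤ) := by
  have c1 : ((H/2 : ℕ) : ℤ) * 2 ≤ (H:ℤ) := by exact_mod_cast Nat.div_mul_le_self H 2
  have c2 : (H:ℤ) ≤ 2 * ((H/2 : ℕ) : ℤ) + 1 := by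
    have : H ≤ 2 * (H/2) + 1 := by omega
    exact_mod_cast this
  ext i
  simp only [spacerSet, Finset.mem_filter, Finset.mem_Icc]
  have habs := abs_le (a := i) (b := ((H/2:ℕ):ℤ))
  constructor
  · rintro ⟨⟨h1, h2⟩, h3⟩
    have h5 := le_abs_self i
    have h6 := neg_abs_le i
    constructor <;> omega
  · rintro ⟨h1, h2⟩
    have h := habs.mpr ⟨h1, h2⟩
    have h5 := le_abs_self i
    have h6 := neg_abs_le i
    refine ⟨⟨by omega, by omega⟩, by omega⟩

lemma spacer_card (H : ℕ) : (spacerSet H).card = 2*(H/2)+1 := by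
  rw [spacer_eq, Int.card_Icc]
  simp
  omega

lemma H_le_card (H : ℕ) : H ≤ (spacerSet H).card := by
  rw [spacer_card]; omega

lemma spacer_bound {H : ℕ} {x : ℤ} (hx : x ∈ spacerSet H) : 2 * |x| ≤ (H:ℤ) := by
  simp only [spacerSet, Finset.mem_filter] at hx; exact hx.2

def EE (m : ℕ) (ω : Fin m → ℤ) (j : ℕ) : ℤ := if h : j < m then ω ⟨j, h⟩ else 0

lemma diffCount_eq (m k : ℕ) (ℓ : ℤ) (ω : Fin m → ℤ) :
    diffCount m k ℓ ω
      = ((Finset.range (m - k)).filter (fun i => EE m ω (i+k) = EE m ω i + ℓ)).card := by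
  unfold diffCount
  congr 1
  apply Finset.filter_congr
  intro i hi
  simp only [Finset.mem_range] at hi
  have h1 : i < m := by omega
  have h2 : i + k < m := by omega
  simp only [EE, dif_pos h1, dif_pos h2, dif_pos (And.intro h2 h1)]
  constructor
  · intro h; omega
  · intro h; omega

lemma omega_card (H m : ℕ) : (omegaSet H m).card = (spacerSet H).card ^ m := by
  simp [omegaSet, Fintype.card_piFinset]

lemma count_le (H m k : ℕ) (hk : 1 ≤ k) (ℓ : ℤ) (S : Finset ℕ) (hS : S ⊆ Finset.range (m - k)) :
    (((omegaSet H m).filter (fun ω => ∀ i ∈ S, EE m ω (i + k) = EE m ω i + ℓ)).card)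
      ≤ (spacerSet H).card ^ (m - S.card) := by
  classical
  set T : Finset ℕ := S.image (· + k) with hT
  have hTcard : T.card = S.card := Finset.card_image_of_injective _ (add_left_injective k)
  have hTm : ∀ j ∈ T, j < m := by
    intro j hj
    simp only [hT, Finset.mem_image] at hj
    obtain ⟨i, hi, rfl⟩ := hj
    have := hS hi; simp only [Finset.mem_range] at this; omega
  set B := (omegaSet H m).filter (fun ω => ∀ i ∈ S, EE m ω (i + k) = EE m ω i + ℓ) with hB
  set t := Fintype.piFinset (fun j : Fin m =>
    if (j:ℕ) ∈ T then ({0} : Finset ℤ) else spacerSet H) with ht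
  have hmaps : ∀ ω ∈ B, (fun (j : Fin m) => if (j:ℕ) ∈ T then 0 else ω j) ∈ t := by
    intro ω hω
    rw [Fintype.mem_piFinset]
    intro j
    by_cases hj : (j:ℕ) ∈ T
    · simp [hj]
    · simp only [hj, if_neg, if_false]
      have := (Finset.mem_filter.mp hω).1
      rw [omegaSet, Fintype.mem_piFinset] at this
      simpa [hj] using this j
  have hinj : Set.InjOn (fun (ω : Fin m → ℤ) => fun (j : Fin m) => if (j:ℕ) ∈ T then 0 else ω j) B := by
    intro ω hω ω' hω' heq
    simp only [Finset.coe_filter, Set.mem_setOf_eq, hB, Finset.mem_coe, Finset.mem_filter] at hω hω'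
    funext j
    have key : ∀ n : ℕ, ∀ j : Fin m, (j : ℕ) = n → ω j = ω' j := by
      intro n
      induction n using Nat.strong_induction_on with
      | _ n ih =>
        intro j hj
        by_cases hjT : (j : ℕ) ∈ T
        · obtain ⟨i, hiS, hik⟩ := Finset.mem_image.mp hjT
          have him : i < m := by have := hS hiS; simp only [Finset.mem_range] at this; omega
          have h1 : EE m ω (i + k) = EE m ω i + ℓ := hω.2 i hiS
          have h2 : EE m ω' (i + k) = EE m ω' i + ℓ := hω'.2 i hiS
          have hikm : i + k < m := by rw [hik]; exact j.isLt
          have e1 : EE m ω (i+k) = ω j := by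
            rw [EE, dif_pos hikm]; congr 1; exact Fin.ext hik
          have e2 : EE m ω' (i+k) = ω' j := by
            rw [EE, dif_pos hikm]; congr 1; exact Fin.ext hik
          have e3 : EE m ω i = ω ⟨i, him⟩ := by rw [EE, dif_pos him]
          have e4 : EE m ω' i = ω' ⟨i, him⟩ := by rw [EE, dif_pos him]
          have hωi : ω ⟨i, him⟩ = ω' ⟨i, him⟩ := ih i (by omega) ⟨i, him⟩ rfl
          rw [← e1, ← e2, h1, h2, e3, e4, hωi]
        · have := congrFun heq j
          simpa [hjT] using this
    exact key j.val j rfl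
  calc B.card ≤ t.card := Finset.card_le_card_of_injOn _ hmaps hinj
    _ = (spacerSet H).card ^ (m - S.card) := by
        rw [ht, Fintype.card_piFinset]
        have : ∀ j : Fin m, (if (j:ℕ) ∈ T then ({0} : Finset ℤ) else spacerSet H).card
            = if (j:ℕ) ∈ T then 1 else (spacerSet H).card := by
          intro j; by_cases hj : (j:ℕ) ∈ T <;> simp [hj]
        rw [Finset.prod_congr rfl (fun j _ => this j)]
        rw [Finset.prod_ite, Finset.prod_const, Finset.prod_const, one_pow, one_mul]
        congr 1
        have hfT : (Finset.univ.filter (fun j : Fin m => (j:ℕ) ∈ T)) = T.attachFin hTm := by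
          ext j; simp [Finset.mem_attachFin]
        have h1 : (Finset.univ.filter (fun j : Fin m => ¬ (j:ℕ) ∈ T)).card
            = m - T.card := by
          have := Finset.card_filter_add_card_filter_not
            (s := (Finset.univ : Finset (Fin m))) (p := fun j : Fin m => (j:ℕ) ∈ T)
          rw [hfT, Finset.card_attachFin] at this
          simp only [Finset.card_univ, Fintype.card_fin] at this
          omega
        rw [h1, hTcard]

lemma sum_powerset_pow (n : ℕ) (x : ℝ) :
    ∑ t ∈ (Finset.range n).powerset, x ^ t.card = (x + 1) ^ n := by
  have h := Finset.prod_add (fun _ : ℕ => x) (fun _ : ℕ => 1) (Finset.range n)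
  simp only [Finset.prod_const, Finset.prod_const_one, mul_one, Finset.card_range] at h
  simp only [one_pow, mul_one] at h
  exact h.symm

lemma zero_mem_spacer (H : ℕ) : (0:ℤ) ∈ spacerSet H := by
  simp [spacerSet]

lemma card_pos (H : ℕ) : 0 < (spacerSet H).card :=
  Finset.card_pos.mpr ⟨0, zero_mem_spacer H⟩

lemma mgf_le (H m k : ℕ) (hk : 1 ≤ k) (ℓ : ℤ) (α : ℝ) (hα : 1 ≤ α) :
    ∑ ω ∈ omegaSet H m, α ^ (diffCount m k ℓ ω)
      ≤ ((spacerSet H).card : ℝ) ^ m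
          * (1 + (α - 1) / ((spacerSet H).card : ℝ)) ^ (m - k) := by
  classical
  set X : ℝ := ((spacerSet H).card : ℝ) with hX
  have hX0 : 0 < X := by rw [hX]; exact_mod_cast card_pos H
  have step1 : ∀ ω, α ^ (diffCount m k ℓ ω)
      = ∑ t ∈ (Finset.range (m-k)).powerset,
          (if (∀ i ∈ t, EE m ω (i+k) = EE m ω i + ℓ) then (α - 1) ^ t.card else 0) := by
    intro ω
    rw [diffCount_eq]
    have e2 : ∀ i ∈ Finset.range (m-k),
        ((if EE m ω (i+k) = EE m ω i + ℓ then (α-1) else 0) + 1)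
          = (if EE m ω (i+k) = EE m ω i + ℓ then α else 1) := by
      intro i _
      by_cases h : EE m ω (i+k) = EE m ω i + ℓ <;> simp [h]
    have e1 : α ^ ((Finset.range (m-k)).filter
        (fun i => EE m ω (i+k) = EE m ω i + ℓ)).card
        = ∏ i ∈ Finset.range (m-k),
            ((if EE m ω (i+k) = EE m ω i + ℓ then (α-1) else 0) + 1) := by
      rw [Finset.prod_congr rfl e2]
      rw [Finset.prod_ite, Finset.prod_const, Finset.prod_const_one, mul_one]
    rw [e1, Finset.prod_add]
    apply Finset.sum_congr rfl
    intro t ht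
    simp only [Finset.prod_const_one, mul_one]
    by_cases h : ∀ i ∈ t, EE m ω (i+k) = EE m ω i + ℓ
    · rw [if_pos h, Finset.prod_congr rfl (fun i hi => if_pos (h i hi)), Finset.prod_const]
    · rw [if_neg h]
      push_neg at h
      obtain ⟨i, hi, hPi⟩ := h
      exact Finset.prod_eq_zero hi (if_neg hPi)
  calc ∑ ω ∈ omegaSet H m, α ^ (diffCount m k ℓ ω)
      = ∑ t ∈ (Finset.range (m-k)).powerset,
          (α - 1) ^ t.card *
            (((omegaSet H m).filter
              (fun ω => ∀ i ∈ t, EE m ω (i+k) = EE m ω i + ℓ)).card : ℝ) := by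
        rw [Finset.sum_congr rfl (fun ω _ => step1 ω), Finset.sum_comm]
        apply Finset.sum_congr rfl
        intro t _
        rw [← Finset.sum_filter, Finset.sum_const, nsmul_eq_mul, mul_comm]
    _ ≤ ∑ t ∈ (Finset.range (m-k)).powerset, (α - 1) ^ t.card * X ^ (m - t.card) := by
        apply Finset.sum_le_sum
        intro t ht
        apply mul_le_mul_of_nonneg_left _ (pow_nonneg (by linarith) _)
        have := count_le H m k hk ℓ t (Finset.mem_powerset.mp ht)
        calc (((omegaSet H m).filter
              (fun ω => ∀ i ∈ t, EE m ω (i+k) = EE m ω i + ℓ)).card : ℝ)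
            ≤ ((spacerSet H).card ^ (m - t.card) : ℕ) := by exact_mod_cast this
          _ = X ^ (m - t.card) := by push_cast; rfl
    _ = X ^ m * ∑ t ∈ (Finset.range (m-k)).powerset, ((α - 1)/X) ^ t.card := by
        rw [Finset.mul_sum]
        apply Finset.sum_congr rfl
        intro t ht
        have htc : t.card ≤ m := by
          have := Finset.card_le_card (Finset.mem_powerset.mp ht)
          rw [Finset.card_range] at this
          omega
        rw [div_pow, div_eq_mul_inv]
        rw [show X ^ m = X ^ (m - t.card) * X ^ t.card by
          rw [← pow_add, Nat.sub_add_cancel htc]]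
        field_simp
    _ = X ^ m * (1 + (α - 1)/X) ^ (m-k) := by
        rw [sum_powerset_pow]
        ring_nf

lemma bad_le (H m k : ℕ) (hH : 0 < H) (hk : 1 ≤ k) (hkm : k ≤ m) (ℓ : ℤ) (α : ℝ) (hα : 1 < α) :
    (((omegaSet H m).filter
        (fun ω => ¬ ((diffCount m k ℓ ω : ℝ) ≤ α / H * ((m:ℝ) - k)))).card : ℝ)
      ≤ ((spacerSet H).card : ℝ) ^ m
          * Real.exp (-((α * Real.log α - α + 1) / H) * ((m:ℝ) - k)) := by
  classical
  set X : ℝ := ((spacerSet H).card : ℝ) with hX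
  have hX0 : 0 < X := by rw [hX]; exact_mod_cast card_pos H
  have hHX : (H:ℝ) ≤ X := by rw [hX]; exact_mod_cast H_le_card H
  have hH0 : (0:ℝ) < H := by exact_mod_cast hH
  set n : ℝ := (m:ℝ) - k with hn
  have hn0 : 0 ≤ n := by
    rw [hn]; have : (k:ℝ) ≤ m := by exact_mod_cast hkm
    linarith
  set t₀ : ℝ := α * n / H with ht₀
  have ht₀0 : 0 ≤ t₀ := by positivity
  set Bad := (omegaSet H m).filter
      (fun ω => ¬ ((diffCount m k ℓ ω : ℝ) ≤ α / H * ((m:ℝ) - k))) with hBad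
  have hα0 : (0:ℝ) < α := by linarith
  -- Markov
  have markov : (Bad.card : ℝ) * α ^ t₀ ≤ ∑ ω ∈ omegaSet H m, α ^ (diffCount m k ℓ ω) := by
    have h1 : (Bad.card : ℝ) * α ^ t₀ = ∑ ω ∈ Bad, α ^ t₀ := by
      rw [Finset.sum_const, nsmul_eq_mul]
    rw [h1]
    apply le_trans (Finset.sum_le_sum (fun ω hω => ?_))
      (Finset.sum_le_sum_of_subset_of_nonneg (Finset.filter_subset _ _)
        (fun ω _ _ => by positivity))
    · have hωbad : ¬ ((diffCount m k ℓ ω : ℝ) ≤ α / H * ((m:ℝ) - k)) :=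
        (Finset.mem_filter.mp hω).2
      push_neg at hωbad
      have hle : t₀ ≤ (diffCount m k ℓ ω : ℝ) := by
        rw [ht₀]
        have : α / H * ((m:ℝ) - k) = α * n / H := by rw [hn]; ring
        linarith [this ▸ hωbad.le]
      calc α ^ t₀ ≤ α ^ ((diffCount m k ℓ ω : ℕ) : ℝ) :=
            Real.rpow_le_rpow_of_exponent_le hα.le hle
        _ = α ^ (diffCount m k ℓ ω) := Real.rpow_natCast α _
  have hmgf := mgf_le H m k hk ℓ α hα.le
  have hnm : ((m - k : ℕ) : ℝ) = n := by
    rw [hn]; push_cast [Nat.cast_sub hkm]; ring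
  -- (1 + (α-1)/X)^(m-k) ≤ exp ((α-1)/H * n)
  have hexp : (1 + (α - 1) / X) ^ (m - k) ≤ Real.exp ((α - 1) / H * n) := by
    have h1 : 1 + (α - 1) / X ≤ Real.exp ((α - 1) / X) := by
      have := Real.add_one_le_exp ((α - 1) / X)
      linarith
    have hb0 : (0:ℝ) ≤ 1 + (α - 1) / X := by
      have : (0:ℝ) ≤ (α - 1) / X := div_nonneg (by linarith) hX0.le
      linarith
    have h2 : (1 + (α - 1) / X) ^ (m - k) ≤ (Real.exp ((α - 1) / X)) ^ (m - k) := by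
      apply pow_le_pow_left₀ hb0 h1
    apply h2.trans
    rw [← Real.exp_nat_mul]
    apply Real.exp_le_exp.mpr
    have h3 : (α - 1) / X ≤ (α - 1) / H := by
      apply div_le_div_of_nonneg_left (by linarith) hH0 hHX
    calc ((m - k : ℕ):ℝ) * ((α-1)/X) ≤ ((m - k : ℕ):ℝ) * ((α-1)/H) := by
          apply mul_le_mul_of_nonneg_left h3 (by positivity)
      _ = (α - 1) / H * n := by rw [hnm]; ring
  have key : (Bad.card : ℝ) * α ^ t₀ ≤ X ^ m * Real.exp ((α - 1) / H * n) := by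
    apply markov.trans (hmgf.trans ?_)
    apply mul_le_mul_of_nonneg_left hexp (by positivity)
  have hαt : α ^ t₀ = Real.exp (t₀ * Real.log α) := by
    rw [Real.rpow_def_of_pos hα0]; ring_nf
  have hfin : X ^ m * Real.exp ((α - 1) / H * n) / α ^ t₀
      = X ^ m * Real.exp (-((α * Real.log α - α + 1) / H) * n) := by
    rw [hαt, mul_div_assoc, ← Real.exp_sub]
    congr 2
    rw [ht₀]
    field_simp
    ring
  have hαt0 : (0:ℝ) < α ^ t₀ := Real.rpow_pos_of_pos hα0 _
  calc (Bad.card : ℝ) = (Bad.card : ℝ) * α ^ t₀ / α ^ t₀ := by field_simp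
    _ ≤ X ^ m * Real.exp ((α - 1) / H * n) / α ^ t₀ := by
        gcongr
    _ = X ^ m * Real.exp (-((α * Real.log α - α + 1) / H) * n) := hfin

lemma ell_bound (H m k : ℕ) (ℓ : ℤ) (ω : Fin m → ℤ) (hω : ω ∈ omegaSet H m)
    (h : diffCount m k ℓ ω ≠ 0) : ℓ ∈ Finset.Icc (-(H:ℤ)) H := by
  rw [diffCount_eq] at h
  rw [← Nat.pos_iff_ne_zero, Finset.card_pos] at h
  obtain ⟨i, hi⟩ := h
  simp only [Finset.mem_filter, Finset.mem_range] at hi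
  obtain ⟨hir, heq⟩ := hi
  have h1 : i < m := by omega
  have h2 : i + k < m := by omega
  rw [EE, EE, dif_pos h2, dif_pos h1] at heq
  have hmem : ∀ j : Fin m, ω j ∈ spacerSet H := by
    rw [omegaSet, Fintype.mem_piFinset] at hω; exact hω
  have b1 := spacer_bound (hmem ⟨i+k, h2⟩)
  have b2 := spacer_bound (hmem ⟨i, h1⟩)
  have c1 := le_abs_self (ω ⟨i+k, h2⟩)
  have c2 := neg_abs_le (ω ⟨i+k, h2⟩)
  have c3 := le_abs_self (ω ⟨i, h1⟩)
  have c4 := neg_abs_le (ω ⟨i, h1⟩)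
  simp only [Finset.mem_Icc]
  constructor <;> omega

lemma c_pos (H : ℕ) (hH : 0 < H) (α : ℝ) (hα : 1 < α) :
    0 < (α * Real.log α - α + 1) / H := by
  apply div_pos _ (by exact_mod_cast hH)
  have hα0 : (0:ℝ) < α := by linarith
  have h := Real.log_lt_sub_one_of_pos (x := α⁻¹) (by positivity)
    (by intro hx; rw [inv_eq_one] at hx; linarith)
  rw [Real.log_inv] at h
  have e : α * (1 - α⁻¹) = α - 1 := by field_simp
  have h2 := mul_lt_mul_of_pos_left (show 1 - α⁻¹ < Real.log α by linarith) hα0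
  rw [e] at h2
  linarith

lemma exp_neg_le (x : ℝ) (hx : 0 < x) : Real.exp (-x) ≤ 4 / x^2 := by
  have h1 : x/2 ≤ Real.exp (x/2) := by
    have := Real.add_one_le_exp (x/2); linarith
  have h2 : x^2/4 ≤ Real.exp x := by
    have h3 : (x/2)^2 ≤ (Real.exp (x/2))^2 := by
      apply pow_le_pow_left₀ (by linarith) h1
    rw [← Real.exp_nat_mul] at h3
    calc x^2/4 = (x/2)^2 := by ring
      _ ≤ Real.exp ((2:ℕ) * (x/2)) := h3
      _ = Real.exp x := by congr 1; push_cast; ring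
  rw [Real.exp_neg]
  rw [inv_le_iff_one_le_mul₀ (Real.exp_pos x)]
  rw [div_mul_eq_mul_div, le_div_iff₀ (by positivity)]
  nlinarith

lemma choose_m (H N : ℕ) (c ε : ℝ) (hc : 0 < c) (hε : 0 < ε) :
    ∃ m : ℕ, N ≤ m ∧ 1 ≤ m ∧
      ((2*H+1 : ℕ):ℝ) * m * Real.exp (-(c*ε) * m) < ε := by
  obtain ⟨m, hm⟩ := exists_nat_gt
    (max (N:ℝ) (max 1 (4*((2*H+1 : ℕ):ℝ) / (c^2 * ε^2 * ε))))
  have hmN : (N:ℝ) < m := lt_of_le_of_lt (le_max_left _ _) hm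
  have hm1 : (1:ℝ) < m :=
    lt_of_le_of_lt (le_trans (le_max_left _ _) (le_max_right _ _)) hm
  have hmB : 4*((2*H+1 : ℕ):ℝ) / (c^2 * ε^2 * ε) < m :=
    lt_of_le_of_lt (le_trans (le_max_right _ _) (le_max_right _ _)) hm
  refine ⟨m, by exact_mod_cast hmN.le, by exact_mod_cast hm1.le, ?_⟩
  have hm0 : (0:ℝ) < m := by linarith
  have hx : 0 < c * ε * m := by positivity
  have hexp : Real.exp (-(c*ε) * m) ≤ 4 / (c*ε*m)^2 := by
    have := exp_neg_le (c*ε*m) hx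
    have e : -(c*ε) * m = -(c*ε*m) := by ring
    rw [e]; exact this
  have hHm0 : (0:ℝ) ≤ ((2*H+1 : ℕ):ℝ) * m := by positivity
  calc ((2*H+1 : ℕ):ℝ) * m * Real.exp (-(c*ε) * m)
      ≤ ((2*H+1 : ℕ):ℝ) * m * (4 / (c*ε*m)^2) := by
        apply mul_le_mul_of_nonneg_left hexp hHm0
    _ = 4*((2*H+1 : ℕ):ℝ) / (c^2 * ε^2 * m) := by
        field_simp
    _ < ε := by
        rw [div_lt_iff₀ (by positivity)]
        rw [div_lt_iff₀ (by positivity)] at hmB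
        nlinarith

/-- (Ornstein's probabilistic lemma) For every `α > 1`, `ε > 0` and `N`, there is `m ≥ N`
such that with uniform probability greater than `1 − ε` on `Ω_m = X^m`, every lag
`1 ≤ k ≤ (1−ε)m` and every `ℓ ∈ ℤ` satisfy `C_{k,ℓ} ≤ (α/H)(m − k)`. -/
theorem ornstein_probabilistic_lemma
    (H : ℕ) (hH : 0 < H) (α : ℝ) (hα : 1 < α) (ε : ℝ) (hε : 0 < ε) (N : ℕ) (hN : 0 < N) :
    ∃ m : ℕ, N ≤ m ∧
      (((omegaSet H m).filter (fun ω =>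
          ∀ k : ℕ, 1 ≤ k → (k : ℝ) ≤ (1 - ε) * m → ∀ ℓ : ℤ,
            (diffCount m k ℓ ω : ℝ) ≤ α / H * ((m : ℝ) - k))).card : ℝ)
        / ((omegaSet H m).card : ℝ) > 1 - ε := by
  classical
  set c : ℝ := (α * Real.log α - α + 1) / H with hc
  have hc0 : 0 < c := c_pos H hH α hα
  obtain ⟨m, hmN, hm1, hmkey⟩ := choose_m H N c ε hc0 hε
  refine ⟨m, hmN, ?_⟩
  set X : ℝ := ((spacerSet H).card : ℝ) with hX
  have hX0 : 0 < X := by rw [hX]; exact_mod_cast card_pos H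
  have hXm0 : (0:ℝ) < X ^ m := by positivity
  set good : (Fin m → ℤ) → Prop := fun ω =>
      ∀ k : ℕ, 1 ≤ k → (k : ℝ) ≤ (1 - ε) * m → ∀ ℓ : ℤ,
            (diffCount m k ℓ ω : ℝ) ≤ α / H * ((m : ℝ) - k) with hgood
  set G := (omegaSet H m).filter good with hG
  set B := (omegaSet H m).filter (fun ω => ¬ good ω) with hB
  set K : ℕ := Nat.floor ((1 - ε) * m) with hK
  set P : Finset (ℕ × ℤ) := Finset.Icc 1 K ×ˢ Finset.Icc (-(H:ℤ)) (H:ℤ) with hP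
  have hm0 : (0:ℝ) < m := by exact_mod_cast hm1
  -- B is covered by the union of bad events
  have hsub : B ⊆ P.biUnion (fun p => (omegaSet H m).filter
      (fun ω => ¬ ((diffCount m p.1 p.2 ω : ℝ) ≤ α / H * ((m:ℝ) - p.1)))) := by
    intro ω hω
    rw [hB, Finset.mem_filter] at hω
    obtain ⟨hΩ, hbad⟩ := hω
    have hbad' : ¬ ∀ k : ℕ, 1 ≤ k → (k:ℝ) ≤ (1-ε)*m → ∀ ℓ : ℤ,
        (diffCount m k ℓ ω : ℝ) ≤ α / H * ((m:ℝ) - k) := hbad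
    push_neg at hbad'
    obtain ⟨k, hk1, hkle, ℓ, hℓ⟩ := hbad'
    rw [Finset.mem_biUnion]
    have hkK : k ≤ K := Nat.le_floor hkle
    have hkm : (k:ℝ) ≤ m := by
      calc (k:ℝ) ≤ (1-ε)*m := hkle
        _ ≤ 1*m := by apply mul_le_mul_of_nonneg_right (by linarith) hm0.le
        _ = m := one_mul (m:ℝ)
    have hkmn : k ≤ m := by exact_mod_cast hkm
    have hC0 : diffCount m k ℓ ω ≠ 0 := by
      intro h0
      rw [h0] at hℓ
      have : (0:ℝ) ≤ α / H * ((m:ℝ) - k) := by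
        apply mul_nonneg
        · apply div_nonneg (by linarith) (by positivity)
        · linarith
      push_cast at hℓ
      linarith
    refine ⟨(k, ℓ), ?_, ?_⟩
    · rw [hP, Finset.mem_product]
      exact ⟨Finset.mem_Icc.mpr ⟨hk1, hkK⟩, ell_bound H m k ℓ ω hΩ hC0⟩
    · rw [Finset.mem_filter]; exact ⟨hΩ, not_le.mpr hℓ⟩
  -- cardinality bound
  have hcard : (B.card : ℝ) ≤ (P.card : ℝ) * (X ^ m * Real.exp (-(c*ε) * m)) := by
    have h1 : B.card ≤ ∑ p ∈ P, ((omegaSet H m).filter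
        (fun ω => ¬ ((diffCount m p.1 p.2 ω : ℝ) ≤ α / H * ((m:ℝ) - p.1)))).card :=
      le_trans (Finset.card_le_card hsub) (Finset.card_biUnion_le)
    have h2 : ∀ p ∈ P, (((omegaSet H m).filter
        (fun ω => ¬ ((diffCount m p.1 p.2 ω : ℝ) ≤ α / H * ((m:ℝ) - p.1)))).card : ℝ)
          ≤ X ^ m * Real.exp (-(c*ε) * m) := by
      rintro ⟨k, ℓ⟩ hp
      rw [hP, Finset.mem_product, Finset.mem_Icc] at hp
      obtain ⟨⟨hk1, hkK⟩, _⟩ := hp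
      have hKpos : 0 < K := lt_of_lt_of_le hk1 hkK
      have hεm0 : (1:ℝ) ≤ (1-ε)*m := Nat.one_le_cast.mpr hKpos |>.trans (Nat.floor_le (by
        by_contra hcon
        push_neg at hcon
        have : K = 0 := Nat.floor_of_nonpos (by linarith)
        omega))
      have hfl : ((K:ℕ):ℝ) ≤ (1-ε)*m := Nat.floor_le (by linarith)
      have hkle : (k:ℝ) ≤ (1-ε)*m := le_trans (by exact_mod_cast Nat.cast_le.mpr hkK) hfl
      have hkm : (k:ℝ) ≤ m := by nlinarith
      have hkmn : k ≤ m := by exact_mod_cast hkm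
      calc _ ≤ X ^ m * Real.exp (-c * ((m:ℝ) - k)) := bad_le H m k hH hk1 hkmn ℓ α hα
        _ ≤ X ^ m * Real.exp (-(c*ε) * m) := by
            apply mul_le_mul_of_nonneg_left _ hXm0.le
            apply Real.exp_le_exp.mpr
            nlinarith
    calc (B.card : ℝ) ≤ ∑ p ∈ P, (((omegaSet H m).filter
        (fun ω => ¬ ((diffCount m p.1 p.2 ω : ℝ) ≤ α / H * ((m:ℝ) - p.1)))).card : ℝ) := by
          exact_mod_cast h1
      _ ≤ ∑ _p ∈ P, (X ^ m * Real.exp (-(c*ε) * m)) := Finset.sum_le_sum h2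
      _ = (P.card : ℝ) * (X ^ m * Real.exp (-(c*ε) * m)) := by
          rw [Finset.sum_const, nsmul_eq_mul]
  have hPcard : (P.card : ℝ) ≤ ((2*H+1 : ℕ):ℝ) * m := by
    rw [hP, Finset.card_product]
    have e1 : (Finset.Icc 1 K).card = K := by rw [Nat.card_Icc]; omega
    have e2 : (Finset.Icc (-(H:ℤ)) (H:ℤ)).card = 2*H+1 := by
      rw [Int.card_Icc]
      simp
      omega
    rw [e1, e2]
    have hKm : K ≤ m := by
      rw [hK]
      calc Nat.floor ((1-ε)*(m:ℝ)) ≤ Nat.floor ((m:ℝ)) := by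
            apply Nat.floor_le_floor
            nlinarith
        _ = m := Nat.floor_natCast m
    push_cast
    calc (K:ℝ) * (2*H+1) ≤ (m:ℝ) * (2*H+1) := by
          apply mul_le_mul_of_nonneg_right (by exact_mod_cast hKm) (by positivity)
      _ = (2*H+1) * m := by ring
  have hBfinal : (B.card : ℝ) < ε * X ^ m := by
    calc (B.card : ℝ) ≤ (P.card : ℝ) * (X ^ m * Real.exp (-(c*ε) * m)) := hcard
      _ ≤ (((2*H+1 : ℕ):ℝ) * m) * (X ^ m * Real.exp (-(c*ε) * m)) := by
          apply mul_le_mul_of_nonneg_right hPcard (by positivity)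
      _ = (((2*H+1 : ℕ):ℝ) * m * Real.exp (-(c*ε) * m)) * X ^ m := by ring
      _ < ε * X ^ m := by
          apply mul_lt_mul_of_pos_right _ hXm0
          push_cast at hmkey ⊢
          exact hmkey
  -- conclude
  have hGB : G.card + B.card = (omegaSet H m).card := by
    rw [hG, hB]
    exact Finset.card_filter_add_card_filter_not _
  have hΩc : ((omegaSet H m).card : ℝ) = X ^ m := by
    rw [omega_card]; push_cast; rfl
  have hGcard : (G.card : ℝ) = X ^ m - (B.card : ℝ) := by
    have : (G.card : ℝ) + B.card = X ^ m := by
      rw [← hΩc]; exact_mod_cast hGB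
    linarith
  rw [gt_iff_lt, hΩc, lt_div_iff₀ hXm0, hGcard]
  nlinarith
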